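/- Let q : ℝ → ℝ be a C² function of period 2π. Then ∫₀^{2π} (q''(φ))² - (q'(φ))² dφ ≥ 4·(∫₀^{2π} (q'(φ))² - (q(φ))² dφ) + (2/π)·(∫₀^{2π} q(φ) dφ)², and in particular the left-hand side minus the right-hand side is nonnegative. -/

import Mathlib

open Real intervalIntegral MeasureTheory Complex Set AddCircle Function

noncomputable def fc (f : ℝ → ℝ) (n : ℤ) : ℂ :=
  fourierCoeffOn (by linarith [Real.pi_pos] : (0:ℝ) < 0 + 2 * π) (fun x => (f x : ℂ)) n

lemma parseval (f : ℝ → ℝ) (hf : Continuous f) (hp : ∀ x, f (x + 2*π) = f x) :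
    Summable (fun n : ℤ => ‖fc f n‖^2) ∧
      (∫ x in (0:ℝ)..2*π, (f x)^2) = 2*π * ∑' n : ℤ, ‖fc f n‖^2 := by
  haveI hT : Fact (0 < 2*π) := ⟨by positivity⟩
  set g : ℝ → ℂ := fun x => (f x : ℂ) with hgdef
  have hgc : Continuous g := Complex.continuous_ofReal.comp hf
  have hg0 : g 0 = g (2*π) := by simp only [hgdef]; rw [← hp 0, zero_add]
  have hcont : Continuous (liftIco (2*π) 0 g) :=
    AddCircle.liftIco_zero_continuous hg0 hgc.continuousOn
  set F : C(AddCircle (2*π), ℂ) := ⟨liftIco (2*π) 0 g, hcont⟩ with hFdef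
  set L := ContinuousMap.toLp (E := ℂ) 2 haarAddCircle ℂ F with hLdef
  have h2 : ∀ n, fourierCoeff (L : AddCircle (2*π) → ℂ) n = fc f n := by
    intro n; rw [fourierCoeff_toLp]; exact fourierCoeff_liftIco_eq g n
  have hsum : Summable (fun n : ℤ => ‖fc f n‖^2) := by
    have hm := lp.memℓp (fourierBasis.repr L)
    have hs := hm.summable (by norm_num : (0:ℝ) < (2:ENNReal).toReal)
    simp only [ENNReal.toReal_ofNat, fourierBasis_repr] at hs
    have : (fun n : ℤ => ‖fc f n‖^2)
        = fun n : ℤ => ‖fourierCoeff (L : AddCircle (2*π) → ℂ) n‖ ^ (2:ℝ) := by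
      funext n; rw [h2, ← Real.rpow_natCast _ 2]; norm_num
    rw [this]; exact hs
  refine ⟨hsum, ?_⟩
  have hP := tsum_sq_fourierCoeff L
  simp only [h2] at hP
  have hae : ∫ t : AddCircle (2*π), ‖L t‖^2 ∂haarAddCircle
      = ∫ t : AddCircle (2*π), ‖F t‖^2 ∂haarAddCircle := by
    apply MeasureTheory.integral_congr_ae
    filter_upwards [ContinuousMap.coeFn_toLp (p := 2) (μ := haarAddCircle) (𝕜 := ℂ) F] with t ht
    rw [ht]
  have hvol : ∫ x in (0:ℝ)..(0 + 2*π), ‖F (x : AddCircle (2*π))‖^2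
      = ∫ t : AddCircle (2*π), ‖F t‖^2 ∂volume :=
    AddCircle.intervalIntegral_preimage (2*π) 0 (fun z => ‖F z‖^2)
  have hsmul : ∫ t : AddCircle (2*π), ‖F t‖^2 ∂volume
      = (2*π) * ∫ t : AddCircle (2*π), ‖F t‖^2 ∂haarAddCircle := by
    rw [volume_eq_smul_haarAddCircle, MeasureTheory.integral_smul_measure,
      ENNReal.toReal_ofReal (by positivity : (0:ℝ) ≤ 2*π)]
    rw [smul_eq_mul]
  have hint : ∫ x in (0:ℝ)..(0 + 2*π), ‖F (x : AddCircle (2*π))‖^2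
      = ∫ x in (0:ℝ)..2*π, (f x)^2 := by
    rw [zero_add]
    rw [integral_of_le (by positivity), integral_of_le (by positivity)]
    rw [integral_Ioc_eq_integral_Ioo, integral_Ioc_eq_integral_Ioo]
    apply setIntegral_congr_fun measurableSet_Ioo
    intro x hx
    have hx' : x ∈ Set.Ico (0:ℝ) (0 + 2*π) := by
      constructor <;> [exact hx.1.le; simpa using hx.2]
    show ‖F (x : AddCircle (2*π))‖^2 = (f x)^2
    rw [hFdef]
    simp only [ContinuousMap.coe_mk]
    rw [liftIco_coe_apply hx']
    simp [hgdef, _root_.sq_abs]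
  rw [hint] at hvol
  rw [hvol, hsmul, ← hae, ← hP]

lemma fc_deriv (f : ℝ → ℝ) (hd : Differentiable ℝ f) (hc : Continuous (deriv f))
    (hp : ∀ x, f (x + 2*π) = f x) (n : ℤ) :
    fc (deriv f) n = Complex.I * n * fc f n := by
  haveI hT : Fact (0 < 2*π) := ⟨by positivity⟩
  have hπ : (π:ℂ) ≠ 0 := Complex.ofReal_ne_zero.2 Real.pi_ne_zero
  rcases eq_or_ne n 0 with rfl | hn
  · rw [fc, fourierCoeffOn_eq_integral]
    simp only [neg_zero, fourier_zero, one_smul]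
    rw [intervalIntegral.integral_ofReal,
      intervalIntegral.integral_deriv_eq_sub (fun x _ => hd x) (hc.intervalIntegrable _ _),
      hp 0]
    simp
  · have hder : ∀ x ∈ Set.uIcc (0:ℝ) (0 + 2*π),
        HasDerivAt (fun y : ℝ => ((f y : ℂ))) ((fun y : ℝ => (Complex.ofReal (deriv f y))) x) x :=
      fun x _ => ((hd x).hasDerivAt).ofReal_comp
    have hint : IntervalIntegrable (fun y : ℝ => (Complex.ofReal (deriv f y))) volume 0 (0 + 2*π) :=
      (Complex.continuous_ofReal.comp hc).intervalIntegrable _ _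
    have key := fourierCoeffOn_of_hasDerivAt
      (by linarith [Real.pi_pos] : (0:ℝ) < 0 + 2*π) hn hder hint
    have hz : ((f (0 + 2*π) : ℂ)) - ((f 0 : ℂ)) = 0 := by rw [hp 0]; ring
    rw [hz, mul_zero] at key
    have hn' : (n:ℂ) ≠ 0 := Int.cast_ne_zero.2 hn
    have key' : fc f n = 1 / (-2 * (π:ℂ) * Complex.I * (n:ℂ)) *
        (0 - ((((0:ℝ) + 2*π : ℝ) : ℂ) - (((0:ℝ)) : ℂ)) * fc (deriv f) n) := key
    rw [key']
    push_cast
    field_simp [Complex.I_ne_zero]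
    ring

lemma fc_zero (f : ℝ → ℝ) :
    fc f 0 = (((1/(2*π)) * ∫ x in (0:ℝ)..2*π, f x : ℝ) : ℂ) := by
  rw [fc, fourierCoeffOn_eq_integral]
  simp only [neg_zero, fourier_zero, one_smul]
  rw [intervalIntegral.integral_ofReal]
  simp only [zero_add, sub_zero]
  rw [Complex.real_smul]
  push_cast
  ring

lemma periodic_deriv' (f : ℝ → ℝ) (hp : ∀ x, f (x + 2*π) = f x) :
    ∀ x, deriv f (x + 2*π) = deriv f x := by
  intro x
  have h1 : deriv (fun y => f (y + 2*π)) x = deriv f (x + 2*π) := deriv_comp_add_const f (2*π) x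
  have h2 : (fun y => f (y + 2*π)) = f := funext hp
  rw [h2] at h1; exact h1.symm

lemma int_sign (n : ℤ) : 0 ≤ ((n:ℝ)^2 - 1) * ((n:ℝ)^2 - 4) := by
  rcases le_or_gt n.natAbs 1 with h | h
  · have : n = 0 ∨ n = 1 ∨ n = -1 := by omega
    rcases this with rfl|rfl|rfl <;> norm_num
  · have h2 : (2:ℤ) ≤ n ∨ n ≤ -2 := by omega
    have h3 : (4:ℝ) ≤ (n:ℝ)^2 := by
      rcases h2 with h2 | h2
      · have : (2:ℝ) ≤ (n:ℝ) := by exact_mod_cast h2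
        nlinarith
      · have : (n:ℝ) ≤ -2 := by exact_mod_cast h2
        nlinarith
    nlinarith

theorem stmt_0 (q : ℝ → ℝ) (hq : ContDiff ℝ 2 q)
    (hper : ∀ x, q (x + 2 * π) = q x) :
    (∫ x in (0:ℝ)..(2 * π), (deriv (deriv q) x) ^ 2 - (deriv q x) ^ 2) ≥
      4 * (∫ x in (0:ℝ)..(2 * π), (deriv q x) ^ 2 - (q x) ^ 2) +
        (2 / π) * (∫ x in (0:ℝ)..(2 * π), q x) ^ 2 ∧
    4 * (∫ x in (0:ℝ)..(2 * π), (deriv q x) ^ 2 - (q x) ^ 2) +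
        (2 / π) * (∫ x in (0:ℝ)..(2 * π), q x) ^ 2 ≥ 0 := by
  have hπ : (0:ℝ) < π := Real.pi_pos
  -- regularity
  have hq1 : Differentiable ℝ q := hq.differentiable (by norm_num)
  have h2 : ContDiff ℝ 1 (deriv q) := by
    have := contDiff_succ_iff_deriv.mp (show ContDiff ℝ (1+1) q by exact_mod_cast hq)
    exact this.2.2
  have hdq : Differentiable ℝ (deriv q) := h2.differentiable one_ne_zero
  have hcq : Continuous q := hq.continuous
  have hcq' : Continuous (deriv q) := h2.continuous
  have hcq'' : Continuous (deriv (deriv q)) := h2.continuous_deriv le_rfl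
  -- periodicity
  have hper' : ∀ x, deriv q (x + 2*π) = deriv q x := periodic_deriv' q hper
  have hper'' : ∀ x, deriv (deriv q) (x + 2*π) = deriv (deriv q) x :=
    periodic_deriv' (deriv q) hper'
  -- Parseval
  obtain ⟨hSq, hIq⟩ := parseval q hcq hper
  obtain ⟨hSq', hIq'⟩ := parseval (deriv q) hcq' hper'
  obtain ⟨hSq'', hIq''⟩ := parseval (deriv (deriv q)) hcq'' hper''
  set a : ℤ → ℝ := fun n => ‖fc q n‖^2 with hadef
  have ha0 : ∀ n, 0 ≤ a n := fun n => sq_nonneg _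
  -- coefficient relations
  have hrel1 : ∀ n : ℤ, ‖fc (deriv q) n‖^2 = (n:ℝ)^2 * a n := by
    intro n
    rw [fc_deriv q hq1 hcq' hper n, norm_mul, norm_mul, Complex.norm_I, one_mul,
      Complex.norm_intCast, mul_pow, _root_.sq_abs]
  have hrel2 : ∀ n : ℤ, ‖fc (deriv (deriv q)) n‖^2 = (n:ℝ)^4 * a n := by
    intro n
    rw [fc_deriv (deriv q) hdq hcq'' hper' n, norm_mul, norm_mul, Complex.norm_I, one_mul,
      Complex.norm_intCast, mul_pow, _root_.sq_abs, hrel1 n]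
    ring
  -- summabilities and tsums
  have hA : Summable a := hSq
  have hB : Summable (fun n : ℤ => (n:ℝ)^2 * a n) := by
    have : (fun n : ℤ => (n:ℝ)^2 * a n) = fun n => ‖fc (deriv q) n‖^2 :=
      funext fun n => (hrel1 n).symm
    rw [this]; exact hSq'
  have hC : Summable (fun n : ℤ => (n:ℝ)^4 * a n) := by
    have : (fun n : ℤ => (n:ℝ)^4 * a n) = fun n => ‖fc (deriv (deriv q)) n‖^2 :=
      funext fun n => (hrel2 n).symm
    rw [this]; exact hSq''
  set A := ∑' n : ℤ, a n with hAdef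
  set B := ∑' n : ℤ, (n:ℝ)^2 * a n with hBdef
  set C := ∑' n : ℤ, (n:ℝ)^4 * a n with hCdef
  have hIq'2 : (∫ x in (0:ℝ)..2*π, (deriv q x)^2) = 2*π * B := by
    rw [hIq']; congr 1; exact tsum_congr hrel1
  have hIq''2 : (∫ x in (0:ℝ)..2*π, (deriv (deriv q) x)^2) = 2*π * C := by
    rw [hIq'']; congr 1; exact tsum_congr hrel2
  -- mean value
  set M := ∫ x in (0:ℝ)..2*π, q x with hMdef
  have hM2 : M^2 = 4*π^2 * a 0 := by
    have : a 0 = ((1/(2*π)) * M)^2 := by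
      rw [hadef]
      simp only
      rw [fc_zero q, Complex.norm_real, Real.norm_eq_abs, _root_.sq_abs]
    rw [this]
    field_simp
    ring
  -- key inequalities
  have key1 : C - 5*B + 4*A - 4*(a 0) ≥ 0 := by
    set w : ℤ → ℝ := fun n => ((n:ℝ)^2 - 1) * ((n:ℝ)^2 - 4) * a n with hwdef
    have hweq : ∀ n, w n = ((n:ℝ)^4 * a n - 5*((n:ℝ)^2 * a n)) + 4*a n := by
      intro n; rw [hwdef]; ring
    have hw : Summable w := by
      rw [show w = fun n : ℤ => ((n:ℝ)^4 * a n - 5*((n:ℝ)^2 * a n)) + 4*a n from funext hweq]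
      exact (hC.sub (hB.mul_left 5)).add (hA.mul_left 4)
    have hts : ∑' n, w n = C - 5*B + 4*A := by
      calc ∑' n, w n = ∑' n : ℤ, (((n:ℝ)^4 * a n - 5*((n:ℝ)^2 * a n)) + 4*a n) :=
            tsum_congr hweq
        _ = (∑' n : ℤ, ((n:ℝ)^4 * a n - 5*((n:ℝ)^2 * a n))) + ∑' n : ℤ, 4*a n :=
            Summable.tsum_add (hC.sub (hB.mul_left 5)) (hA.mul_left 4)
        _ = ((∑' n : ℤ, (n:ℝ)^4 * a n) - ∑' n : ℤ, 5*((n:ℝ)^2 * a n)) + ∑' n : ℤ, 4*a n := by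
            rw [Summable.tsum_sub hC (hB.mul_left 5)]
        _ = C - 5*B + 4*A := by rw [tsum_mul_left, tsum_mul_left]
    have hw0 : w 0 = 4 * a 0 := by rw [hwdef]; norm_num
    have hge : w 0 ≤ ∑' n, w n :=
      Summable.le_tsum hw 0 (fun n _ => mul_nonneg (int_sign n) (ha0 n))
    rw [hw0, hts] at hge
    linarith
  have key2 : B - A + a 0 ≥ 0 := by
    set v : ℤ → ℝ := fun n => ((n:ℝ)^2 - 1) * a n with hvdef
    have hveq : ∀ n, v n = (n:ℝ)^2 * a n - a n := by intro n; rw [hvdef]; ring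
    have hv : Summable v := by
      rw [show v = fun n : ℤ => (n:ℝ)^2 * a n - a n from funext hveq]
      exact hB.sub hA
    have hts : ∑' n, v n = B - A := by
      calc ∑' n, v n = ∑' n : ℤ, ((n:ℝ)^2 * a n - a n) := tsum_congr hveq
        _ = B - A := Summable.tsum_sub hB hA
    have hv0 : v 0 = -(a 0) := by rw [hvdef]; norm_num
    have hge : v 0 ≤ ∑' n, v n := by
      apply Summable.le_tsum hv 0
      intro n hn
      have h1 : (1:ℝ) ≤ |(n:ℝ)| := by
        rw [← Int.cast_abs]
        exact_mod_cast Int.one_le_abs hn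
      have h2 : (1:ℝ) ≤ (n:ℝ)^2 := by nlinarith [abs_nonneg ((n:ℝ)), _root_.sq_abs ((n:ℝ))]
      exact mul_nonneg (by linarith) (ha0 n)
    rw [hv0, hts] at hge
    linarith
  -- split the integrals
  have hi1 : (∫ x in (0:ℝ)..(2*π), (deriv (deriv q) x)^2 - (deriv q x)^2)
      = (∫ x in (0:ℝ)..2*π, (deriv (deriv q) x)^2) - ∫ x in (0:ℝ)..2*π, (deriv q x)^2 :=
    integral_sub ((hcq''.pow 2).intervalIntegrable _ _) ((hcq'.pow 2).intervalIntegrable _ _)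
  have hi2 : (∫ x in (0:ℝ)..(2*π), (deriv q x)^2 - (q x)^2)
      = (∫ x in (0:ℝ)..2*π, (deriv q x)^2) - ∫ x in (0:ℝ)..2*π, (q x)^2 :=
    integral_sub ((hcq'.pow 2).intervalIntegrable _ _) ((hcq.pow 2).intervalIntegrable _ _)
  have hfrac : (2/π) * M^2 = 8*π*(a 0) := by
    rw [hM2]; field_simp; ring
  constructor
  · rw [hi1, hi2, hIq, hIq'2, hIq''2, hfrac]
    nlinarith [key1, hπ]
  · rw [hi2, hIq, hIq'2, hfrac]
    nlinarith [key2, hπ]
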